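/- Let 0 < α < 2 (or more generally α > 0), (S₁, μ₁), (S₂, μ₂) σ-finite measure spaces, and U : L^α_+(S₁, μ₁) → L^α_+(S₂, μ₂) a max-linear isometry, i.e. U(a₁f₁ ∨ a₂f₂) = a₁Uf₁ ∨ a₂Uf₂ μ₂-a.e. for all f₁, f₂ ∈ L^α_+(S₁,μ₁), a₁, a₂ ≥ 0, and ∫ (Uf)^α dμ₂ = ∫ f^α dμ₁ for all f. Then U maps functions with disjoint supports to functions with a.e.-disjoint supports: if f·g = 0 μ₁-a.e., then (Uf)·(Ug) = 0 μ₂-a.e. -/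

import Mathlib

open MeasureTheory
open scoped NNReal ENNReal

theorem stmt_18 {S₁ S₂ : Type*} [MeasurableSpace S₁] [MeasurableSpace S₂]
    (μ₁ : Measure S₁) (μ₂ : Measure S₂) [SigmaFinite μ₁] [SigmaFinite μ₂]
    (α : ℝ) (hα : 0 < α)
    (U : (S₁ → ℝ≥0) → (S₂ → ℝ≥0))
    (hmaxlin : ∀ (f₁ f₂ : S₁ → ℝ≥0) (a₁ a₂ : ℝ≥0),
      U (fun s => a₁ * f₁ s ⊔ a₂ * f₂ s) =ᵐ[μ₂] fun s => a₁ * U f₁ s ⊔ a₂ * U f₂ s)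
    (hiso : ∀ f : S₁ → ℝ≥0, ∫⁻ s, (U f s : ℝ≥0∞) ^ α ∂μ₂ = ∫⁻ s, (f s : ℝ≥0∞) ^ α ∂μ₁)
    (f g : S₁ → ℝ≥0) (hf : Measurable f) (hg : Measurable g)
    (hUf : Measurable (U f)) (hUg : Measurable (U g))
    (hfL : ∫⁻ s, (f s : ℝ≥0∞) ^ α ∂μ₁ < ⊤) (hgL : ∫⁻ s, (g s : ℝ≥0∞) ^ α ∂μ₁ < ⊤)
    (hdisj : ∀ᵐ s ∂μ₁, f s * g s = 0) :
    ∀ᵐ s ∂μ₂, U f s * U g s = 0 := by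
  have hα' : α ≠ 0 := ne_of_gt hα
  -- Step A: ∫ (f ⊔ g)^α = ∫ f^α + ∫ g^α
  have hA : ∫⁻ s, ((f s ⊔ g s : ℝ≥0) : ℝ≥0∞) ^ α ∂μ₁
      = ∫⁻ s, (f s : ℝ≥0∞) ^ α ∂μ₁ + ∫⁻ s, (g s : ℝ≥0∞) ^ α ∂μ₁ := by
    rw [← lintegral_add_left (hf.coe_nnreal_ennreal.pow measurable_const)]
    refine lintegral_congr_ae ?_
    filter_upwards [hdisj] with s hs
    rcases mul_eq_zero.mp hs with h | h
    · simp [h, ENNReal.zero_rpow_of_pos hα]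
    · simp [h, ENNReal.zero_rpow_of_pos hα]
  -- the key max identity, applied with a₁ = a₂ = 1
  have hml := hmaxlin f g 1 1
  simp only [one_mul] at hml
  -- Step B+C: ∫ (Uf ⊔ Ug)^α = ∫ f^α + ∫ g^α
  have hBC : ∫⁻ s, ((U f s ⊔ U g s : ℝ≥0) : ℝ≥0∞) ^ α ∂μ₂
      = ∫⁻ s, (f s : ℝ≥0∞) ^ α ∂μ₁ + ∫⁻ s, (g s : ℝ≥0∞) ^ α ∂μ₁ := by
    rw [← hA, ← hiso (fun s => f s ⊔ g s)]
    refine lintegral_congr_ae ?_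
    filter_upwards [hml] with s hs
    rw [hs]
  -- pointwise: (a ⊔ b)^α + (a ⊓ b)^α = a^α + b^α in ℝ≥0∞
  have hpt : ∀ s, ((U f s ⊔ U g s : ℝ≥0) : ℝ≥0∞) ^ α + ((U f s ⊓ U g s : ℝ≥0) : ℝ≥0∞) ^ α
      = (U f s : ℝ≥0∞) ^ α + (U g s : ℝ≥0∞) ^ α := by
    intro s
    rcases le_total (U f s) (U g s) with h | h
    · rw [sup_eq_right.mpr h, inf_eq_left.mpr h, add_comm]
    · rw [sup_eq_left.mpr h, inf_eq_right.mpr h]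
  -- integrate the pointwise identity
  have hint : ∫⁻ s, ((U f s ⊔ U g s : ℝ≥0) : ℝ≥0∞) ^ α ∂μ₂
        + ∫⁻ s, ((U f s ⊓ U g s : ℝ≥0) : ℝ≥0∞) ^ α ∂μ₂
      = ∫⁻ s, (U f s : ℝ≥0∞) ^ α ∂μ₂ + ∫⁻ s, (U g s : ℝ≥0∞) ^ α ∂μ₂ := by
    rw [← lintegral_add_left ((Measurable.coe_nnreal_ennreal (f := fun s => U f s ⊔ U g s) (hUf.sup hUg)).pow measurable_const),
      ← lintegral_add_left (hUf.coe_nnreal_ennreal.pow measurable_const)]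
    exact lintegral_congr fun s => hpt s
  rw [hiso f, hiso g, ← hBC] at hint
  have hfin : ∫⁻ s, ((U f s ⊔ U g s : ℝ≥0) : ℝ≥0∞) ^ α ∂μ₂ ≠ ⊤ := by
    rw [hBC]
    exact ENNReal.add_ne_top.mpr ⟨hfL.ne, hgL.ne⟩
  have hzero : ∫⁻ s, ((U f s ⊓ U g s : ℝ≥0) : ℝ≥0∞) ^ α ∂μ₂ = 0 := by
    have := hint
    nth_rewrite 2 [← add_zero (∫⁻ s, ((U f s ⊔ U g s : ℝ≥0) : ℝ≥0∞) ^ α ∂μ₂)] at this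
    exact (ENNReal.add_right_inj hfin).mp this
  have hmeas : Measurable fun s => ((U f s ⊓ U g s : ℝ≥0) : ℝ≥0∞) ^ α :=
    (hUf.inf hUg).coe_nnreal_ennreal.pow measurable_const
  have hae := (lintegral_eq_zero_iff hmeas).mp hzero
  filter_upwards [hae] with s hs
  simp only [Pi.zero_apply, ENNReal.rpow_eq_zero_iff] at hs
  rcases hs with ⟨h0, -⟩ | ⟨-, h⟩
  · have hm : U f s ⊓ U g s = 0 := by exact_mod_cast h0
    rcases le_total (U f s) (U g s) with h' | h'
    · rw [inf_eq_left.mpr h'] at hm; simp [hm]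
    · rw [inf_eq_right.mpr h'] at hm; simp [hm]
  · exact absurd h (not_lt.mpr hα.le)
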